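/- Let Γ be a group, let Γ₀ and Γ₁ be subgroups of Γ, let u : Γ → ℂ be square-summable, and let x₀ ∈ Γ satisfy u(x₀) ≠ 0. Suppose that for every z ∈ Γ₁ there exists a function f_z : Γ → ℂ supported in Γ₀ with ∑_{t ∈ Γ} |f_z(t)|² ≤ 1 such that the family (f_z(t) u(t⁻¹ x₀ z))_{t ∈ Γ₀} is summable with u(x₀) = ∑_{t ∈ Γ₀} f_z(t) u(t⁻¹ x₀ z). Then the set of right cosets {Γ₀ x₀ z : z ∈ Γ₁} is finite; that is, x₀Γ₁ is contained in the union of finitely many right cosets of Γ₀. -/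
import Mathlib


/-- Equation (3.1) ("modified") in the proof of Theorem 3.1: if `u ∈ ℓ²(Γ)`, `u(x₀) ≠ 0`, and
for every `z ∈ Γ₁` there is `f_z` supported in `Γ₀` with `∑ |f_z|² ≤ 1` and
`u(x₀) = ∑_{t ∈ Γ₀} f_z(t) u(t⁻¹ x₀ z)`, then `x₀Γ₁` is contained in a finite union of
right cosets of `Γ₀`, i.e. the set of right cosets `{Γ₀x₀z : z ∈ Γ₁}` is finite. -/
theorem stmt3 {Γ : Type*} [Group Γ] (Γ₀ Γ₁ : Subgroup Γ) (u : Γ → ℂ)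
    (hu : Summable fun x : Γ => ‖u x‖ ^ 2) (x₀ : Γ) (hx₀ : u x₀ ≠ 0)
    (h : ∀ z ∈ Γ₁, ∃ f : Γ → ℂ,
        (∀ t : Γ, t ∉ Γ₀ → f t = 0) ∧
        (Summable fun t : Γ => ‖f t‖ ^ 2) ∧
        (∑' t : Γ, ‖f t‖ ^ 2 ≤ 1) ∧
        Summable (fun t : Γ₀ => f t * u ((t : Γ)⁻¹ * (x₀ * z))) ∧
        u x₀ = ∑' t : Γ₀, f t * u ((t : Γ)⁻¹ * (x₀ * z))) :
    {C : Set Γ | ∃ z ∈ Γ₁, C = (fun g => g * (x₀ * z)) '' (Γ₀ : Set Γ)}.Finite := by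
  classical
  set S := {C : Set Γ | ∃ z ∈ Γ₁, C = (fun g => g * (x₀ * z)) '' (Γ₀ : Set Γ)} with hS
  set c : ℝ := ‖u x₀‖ with hc
  have hcpos : 0 < c := norm_pos_iff.2 hx₀
  -- Key lower bound per coset
  have key : ∀ C ∈ S, c ^ 2 ≤ ∑' y : C, ‖u (y : Γ)‖ ^ 2 := by
    rintro C ⟨z, hz, rfl⟩
    obtain ⟨f, hsupp, hf2, hf2le, hsummul, heq⟩ := h z hz
    -- injective map Γ₀ → Γ
    have hinj : Function.Injective (fun t : Γ₀ => (t : Γ)⁻¹ * (x₀ * z)) := by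
      intro a b hab
      have h1 : (a : Γ)⁻¹ = (b : Γ)⁻¹ := mul_right_cancel hab
      exact Subtype.ext (inv_injective h1)
    have hSz : Summable (fun t : Γ₀ => ‖u ((t : Γ)⁻¹ * (x₀ * z))‖ ^ 2) :=
      hu.comp_injective hinj
    have hfsub : Summable (fun t : Γ₀ => ‖f (t : Γ)‖ ^ 2) := hf2.subtype _
    have amgm : ∀ a b : ℝ, a * b ≤ (c / 2) * a ^ 2 + (1 / (2 * c)) * b ^ 2 := by
      intro a b
      rw [← sub_nonneg]
      have hrw : (c / 2) * a ^ 2 + (1 / (2 * c)) * b ^ 2 - a * b = (c * a - b) ^ 2 / (2 * c) := by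
        field_simp
        ring
      rw [hrw]
      positivity
    -- summability of the norm products
    have hnorms : Summable (fun t : Γ₀ => ‖f (t : Γ) * u ((t : Γ)⁻¹ * (x₀ * z))‖) := by
      refine Summable.of_nonneg_of_le (fun t => norm_nonneg _) (fun t => ?_)
        ((hfsub.mul_left ((c : ℝ) / 2)).add (hSz.mul_left (1 / (2 * c))))
      rw [norm_mul]
      exact amgm _ _
    have step1 : c ≤ ∑' t : Γ₀, ‖f (t : Γ) * u ((t : Γ)⁻¹ * (x₀ * z))‖ := by
      calc c = ‖∑' t : Γ₀, f (t : Γ) * u ((t : Γ)⁻¹ * (x₀ * z))‖ := by rw [hc, heq]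
      _ ≤ _ := norm_tsum_le_tsum_norm hnorms
    have step2 : ∑' t : Γ₀, ‖f (t : Γ) * u ((t : Γ)⁻¹ * (x₀ * z))‖
        ≤ (c / 2) * (∑' t : Γ₀, ‖f (t : Γ)‖ ^ 2)
          + (1 / (2 * c)) * (∑' t : Γ₀, ‖u ((t : Γ)⁻¹ * (x₀ * z))‖ ^ 2) := by
      rw [← tsum_mul_left, ← tsum_mul_left, ← Summable.tsum_add (hfsub.mul_left _) (hSz.mul_left _)]
      refine Summable.tsum_le_tsum (fun t => ?_) hnorms ((hfsub.mul_left _).add (hSz.mul_left _))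
      rw [norm_mul]
      exact amgm _ _
    have hfle1 : (∑' t : Γ₀, ‖f (t : Γ)‖ ^ 2) ≤ 1 :=
      le_trans (Summable.tsum_le_tsum_of_inj (fun t : Γ₀ => (t : Γ)) Subtype.val_injective
        (fun c _ => sq_nonneg _) (fun t => le_rfl) hfsub hf2) hf2le
    have hSzlb : c ^ 2 ≤ ∑' t : Γ₀, ‖u ((t : Γ)⁻¹ * (x₀ * z))‖ ^ 2 := by
      have hfnonneg : 0 ≤ ∑' t : Γ₀, ‖f (t : Γ)‖ ^ 2 :=
        tsum_nonneg fun t => sq_nonneg _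
      set Sz := ∑' t : Γ₀, ‖u ((t : Γ)⁻¹ * (x₀ * z))‖ ^ 2 with hSzdef
      have hSznn : 0 ≤ Sz := tsum_nonneg fun t => sq_nonneg _
      have h1 : c ≤ c / 2 + (1 / (2 * c)) * Sz := by
        have h12 := step1.trans step2
        nlinarith [mul_le_mul_of_nonneg_left hfle1 (by positivity : (0:ℝ) ≤ c / 2)]
      have h4 : c / 2 ≤ 1 / (2 * c) * Sz := by linarith
      calc c ^ 2 = 2 * c * (c / 2) := by ring
      _ ≤ 2 * c * (1 / (2 * c) * Sz) :=
          mul_le_mul_of_nonneg_left h4 (by linarith)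
      _ = Sz := by field_simp
    -- transfer to sum over the coset
    refine hSzlb.trans ?_
    have hmem : ∀ t : Γ₀, (t : Γ)⁻¹ * (x₀ * z) ∈ (fun g => g * (x₀ * z)) '' (Γ₀ : Set Γ) :=
      fun t => ⟨(t : Γ)⁻¹, Γ₀.inv_mem t.2, rfl⟩
    refine Summable.tsum_le_tsum_of_inj (fun t : Γ₀ => (⟨(t : Γ)⁻¹ * (x₀ * z), hmem t⟩ :
        ((fun g => g * (x₀ * z)) '' (Γ₀ : Set Γ))))
      (fun a b hab => hinj (congrArg Subtype.val hab))
      (fun y _ => sq_nonneg _) (fun t => le_rfl) hSz (hu.subtype _)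
  -- distinct cosets are disjoint
  have hdisj : ∀ C ∈ S, ∀ D ∈ S, C ≠ D → Disjoint C D := by
    have coset_eq : ∀ a b : Γ, (∃ x, x ∈ (fun g => g * a) '' (Γ₀ : Set Γ) ∧
        x ∈ (fun g => g * b) '' (Γ₀ : Set Γ)) →
        (fun g => g * a) '' (Γ₀ : Set Γ) ⊆ (fun g => g * b) '' (Γ₀ : Set Γ) := by
      rintro a b ⟨x, ⟨g, hg, rfl⟩, ⟨k, hk, hx⟩⟩ y ⟨g', hg', rfl⟩
      refine ⟨g' * g⁻¹ * k, mul_mem (mul_mem hg' (Γ₀.inv_mem hg)) hk, ?_⟩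
      have hx' : k * b = g * a := hx
      show g' * g⁻¹ * k * b = g' * a
      rw [mul_assoc, hx']
      group
    rintro C hC D hD hne
    rw [Set.disjoint_left]
    intro x hxC hxD
    obtain ⟨z, hz, rfl⟩ := hC
    obtain ⟨w, hw, rfl⟩ := hD
    exact hne (le_antisymm (coset_eq _ _ ⟨x, hxC, hxD⟩) (coset_eq _ _ ⟨x, hxD, hxC⟩))
  -- counting argument
  by_contra hinf
  have : Infinite S := Set.infinite_coe_iff.2 hinf
  set T : ℝ := ∑' x : Γ, ‖u x‖ ^ 2 with hT
  set n : ℕ := ⌊T / c ^ 2⌋₊ + 1 with hn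
  obtain ⟨F₀, hF₀⟩ := Infinite.exists_subset_card_eq S n
  set F : Finset (Set Γ) := F₀.image Subtype.val with hF
  have hFcard : F.card = n := by
    rw [hF, Finset.card_image_of_injective _ Subtype.val_injective, hF₀]
  have hFS : ∀ C ∈ F, C ∈ S := by
    intro C hC
    simp only [hF, Finset.mem_image] at hC
    obtain ⟨s, _, rfl⟩ := hC
    exact s.2
  -- the sum over F of coset sums is at most T
  have hbound : (n : ℝ) * c ^ 2 ≤ T := by
    have hind : ∀ C ∈ F, Summable (fun x : Γ => C.indicator (fun y => ‖u y‖ ^ 2) x) :=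
      fun C _ => hu.indicator C
    have hsum_eq : ∀ C ∈ F, c ^ 2 ≤ ∑' x : Γ, C.indicator (fun y => ‖u y‖ ^ 2) x := by
      intro C hC
      rw [← tsum_subtype]
      exact key C (hFS C hC)
    calc (n : ℝ) * c ^ 2 = ∑ _C ∈ F, c ^ 2 := by rw [Finset.sum_const, hFcard, nsmul_eq_mul]
    _ ≤ ∑ C ∈ F, ∑' x : Γ, C.indicator (fun y => ‖u y‖ ^ 2) x :=
        Finset.sum_le_sum hsum_eq
    _ = ∑' x : Γ, ∑ C ∈ F, C.indicator (fun y => ‖u y‖ ^ 2) x := (Summable.tsum_finsetSum hind).symm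
    _ ≤ ∑' x : Γ, ‖u x‖ ^ 2 := by
        refine Summable.tsum_le_tsum (fun x => ?_) ?_ hu
        · by_cases hx : ∃ C ∈ F, x ∈ C
          · obtain ⟨C₀, hC₀F, hxC₀⟩ := hx
            have : ∑ C ∈ F, C.indicator (fun y => ‖u y‖ ^ 2) x
                = C₀.indicator (fun y => ‖u y‖ ^ 2) x := by
              refine Finset.sum_eq_single C₀ (fun D hDF hDne => ?_) (fun hc => absurd hC₀F hc)
              have : x ∉ D := by
                have := hdisj D (hFS D hDF) C₀ (hFS C₀ hC₀F) hDne
                exact fun hxD => (Set.disjoint_left.1 this hxD) hxC₀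
              simp [Set.indicator_of_notMem this]
            rw [this, Set.indicator_of_mem hxC₀]
          · push_neg at hx
            rw [Finset.sum_eq_zero (fun C hC => Set.indicator_of_notMem (hx C hC) _)]
            positivity
        · exact summable_sum fun C hC => hind C hC
  have hTlt : T / c ^ 2 < (n : ℝ) := by
    rw [hn]; push_cast; exact Nat.lt_floor_add_one _
  have : T < n * c ^ 2 := by
    rw [div_lt_iff₀ (by positivity)] at hTlt
    linarith
  linarith
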